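/- For coprime r < s with g = (r-1)(s-1)/2, define a partition Λ by Λ_i = g - N(i-1) + (i-1) for 1 ≤ i ≤ g, where N is the increasing enumeration of the semigroup ⟨r,s⟩. Then Λ_1 ≥ Λ_2 ≥ ... ≥ Λ_g ≥ 0, i.e., Λ is a genuine (weakly decreasing) partition. -/

import Mathlib

theorem semigroup_partition_is_partition (r s : ℕ) (hr : 1 < r) (hrs : r < s)
    (hco : Nat.Coprime r s) (g : ℕ) (hg : g = (r - 1) * (s - 1) / 2)
    (N : ℕ → ℕ) (hN : N = Nat.nth (fun n => ∃ a b : ℕ, a * r + b * s = n))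
    (Λ : ℕ → ℤ) (hΛ : ∀ i : ℕ, Λ i = (g : ℤ) - (N (i - 1) : ℤ) + ((i : ℤ) - 1)) :
    (∀ i : ℕ, 1 ≤ i → i < g → Λ (i + 1) ≤ Λ i) ∧ (1 ≤ g → 0 ≤ Λ g) := by
  classical
  set P : ℕ → Prop := fun n => ∃ a b : ℕ, a * r + b * s = n with hP
  have hinf : (setOf P).Infinite := by
    apply Set.infinite_of_injective_forall_mem (f := fun k : ℕ => k * r)
    · intro a b hab
      exact Nat.eq_of_mul_eq_mul_right (by omega) hab
    · intro k
      exact ⟨k, 0, by ring⟩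
  -- 2*g = (r-1)*(s-1)
  have h2g : 2 * g = (r - 1) * (s - 1) := by
    rw [hg]
    have : 2 ∣ (r - 1) * (s - 1) := by
      rcases Nat.even_or_odd r with he | ho
      · have hs : ¬ 2 ∣ s := by
          intro h2s
          have : 2 ∣ Nat.gcd r s := Nat.dvd_gcd he.two_dvd h2s
          rw [hco] at this; omega
        have : Odd s := Nat.odd_iff.mpr (by omega)
        exact Dvd.dvd.mul_left (by omega) _
      · exact Dvd.dvd.mul_right (Nat.Odd.sub_odd ho odd_one).two_dvd _
    omega
  haveI : NeZero r := ⟨by omega⟩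
  -- existence of residue b
  have hex : ∀ n : ℕ, ∃ b : ℕ, b < r ∧ n ≡ b * s [MOD r] := by
    intro n
    set u : (ZMod r)ˣ := ZMod.unitOfCoprime s (hco.symm)
    refine ⟨((n : ZMod r) * (↑u⁻¹ : ZMod r)).val, ZMod.val_lt _, ?_⟩
    have : ((((n : ZMod r) * (↑u⁻¹ : ZMod r)).val * s : ℕ) : ZMod r) = (n : ZMod r) := by
      push_cast
      rw [ZMod.natCast_val, ZMod.cast_id]
      have hu : ((u : (ZMod r)ˣ) : ZMod r) = (s : ZMod r) := ZMod.coe_unitOfCoprime s hco.symm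
      rw [← hu, mul_assoc, u.inv_mul, mul_one]
    exact ((ZMod.natCast_eq_natCast_iff _ _ _).mp this).symm
  -- symmetry lemma
  have hsym : ∀ n : ℕ, n < 2 * g → ¬ P n → P (2 * g - 1 - n) := by
    intro n hn hnP
    obtain ⟨b, hb, hmod⟩ := hex n
    rcases le_or_gt (b * s) n with hle | hlt
    · exfalso
      obtain ⟨k, hk⟩ := (Nat.modEq_iff_dvd' hle).mp hmod.symm
      exact hnP ⟨k, b, by rw [mul_comm k r]; omega⟩
    · have hb1 : 1 ≤ b := by
        rcases Nat.eq_zero_or_pos b with h0 | h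
        · rw [h0, zero_mul] at hlt; omega
        · exact h
      obtain ⟨k, hk⟩ := (Nat.modEq_iff_dvd' hlt.le).mp hmod
      have hk1 : 1 ≤ k := by
        rcases Nat.eq_zero_or_pos k with h0 | h
        · subst h0; simp at hk; omega
        · exact h
      refine ⟨k - 1, r - 1 - b, ?_⟩
      have hbs : b * s = k * r + n := by rw [mul_comm k r]; omega
      have hA : r ≤ k * r := Nat.le_mul_of_pos_left r hk1
      have hC : r - 1 ≤ (r - 1) * s := Nat.le_mul_of_pos_right (r - 1) (by omega)
      have hkr : (k - 1) * r = k * r - r := by rw [Nat.sub_mul, one_mul]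
      have hb' : (r - 1 - b) * s = (r - 1) * s - b * s := Nat.sub_mul _ _ _
      have hrs1 : (r - 1) * (s - 1) = (r - 1) * s - (r - 1) := by
        rw [Nat.mul_sub, mul_one]
      have hbs_le : b * s ≤ (r - 1) * s := Nat.mul_le_mul_right s (by omega)
      rw [hkr, hb']
      omega
  -- counting: at least g elements of P below 2g
  have hcount : g ≤ Nat.count P (2 * g) := by
    rw [Nat.count_eq_card_filter_range]
    set A := (Finset.range (2*g)).filter P with hA
    set B := (Finset.range (2*g)).filter (fun n => ¬ P n) with hB
    have hcards : A.card + B.card = 2 * g := by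
      rw [hA, hB, Finset.card_filter_add_card_filter_not, Finset.card_range]
    have hinj : B.card ≤ A.card := by
      apply Finset.card_le_card_of_injOn (fun n => 2 * g - 1 - n)
      · intro n hn
        rw [Finset.mem_coe, Finset.mem_filter, Finset.mem_range] at hn
        rw [Finset.mem_coe, hA, Finset.mem_filter, Finset.mem_range]
        beta_reduce
        exact ⟨by omega, hsym n hn.1 hn.2⟩
      · intro x hx y hy hxy
        simp only [hB, Finset.coe_filter, Finset.mem_range, Set.mem_setOf_eq] at hx hy
        simp only at hxy
        omega
    omega
  have hNg : ∀ k < g, N k < 2 * g := by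
    intro k hk
    rw [hN]
    exact Nat.nth_lt_of_lt_count (lt_of_lt_of_le hk hcount)
  constructor
  · intro i hi1 hig
    rw [hΛ i, hΛ (i+1)]
    have hlt : N (i - 1) < N ((i+1) - 1) := by
      rw [hN]
      exact (Nat.nth_lt_nth hinf).mpr (by omega)
    have : (N (i-1) : ℤ) + 1 ≤ (N (i + 1 - 1) : ℤ) := by exact_mod_cast hlt
    push_cast
    simp only [Nat.add_sub_cancel] at this
    omega
  · intro hg1
    rw [hΛ g]
    have := hNg (g - 1) (by omega)
    have h1 : (N (g-1) : ℤ) < 2 * g := by exact_mod_cast this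
    have hg1' : (1 : ℤ) ≤ g := by exact_mod_cast hg1
    omega
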